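/- Let E < E₀ and δ ∈ (0,1). There exists a constant C > 0, depending only on E, ρ₋, ρ₊ and δ, such that for every continuously differentiable ρ : [−1,1] → ℝ with ρ(−1) = ρ₋, ρ(1) = ρ₊ and δ ≤ ρ ≤ 1−δ, the straight path π̂_t := ρ̄_E + t(ρ − ρ̄_E), t ∈ [0,1], satisfies Î₁(π̂ | ρ̄_E) ≤ C (‖ρ − ρ̄_E‖_∞ + ‖ρ' − ρ̄_E'‖_∞)², where Î₁(π̂ | ρ̄_E) := sup_H Ĵ_H(π̂), the supremum being over all H : [0,1]×[−1,1] → ℝ which are C¹ in t, C² in u, and satisfy H_t(±1) = 0. -/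

import Mathlib

open Real MeasureTheory Set Filter Topology Function

noncomputable section
set_option maxHeartbeats 1000000

/-- Mobility `χ(a) = a(1−a)`. -/
def chi (a : ℝ) : ℝ := a * (1 - a)

section
variable {ρm ρp E J : ℝ}

lemma iiIcc {a b : ℝ} (hab : a ≤ b) {f : ℝ → ℝ} (h : ContinuousOn f (Icc a b)) :
    IntervalIntegrable f volume a b := by
  apply ContinuousOn.intervalIntegrable; rwa [uIcc_of_le hab]

lemma ftcIcc {a b : ℝ} (hab : a ≤ b) {f f' : ℝ → ℝ}
    (hc : ContinuousOn f (Icc a b))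
    (hd : ∀ x ∈ Ioo a b, HasDerivAt f (f' x) x)
    (hi : IntervalIntegrable f' volume a b) :
    ∫ x in a..b, f' x = f b - f a :=
  intervalIntegral.integral_eq_sub_of_hasDeriv_right_of_le hab hc
    (fun x hx => (hd x hx).hasDerivWithinAt) hi

lemma byParts {a b : ℝ} (hab : a ≤ b) {f g f' g' : ℝ → ℝ}
    (hfc : ContinuousOn f (Icc a b)) (hgc : ContinuousOn g (Icc a b))
    (hfd : ∀ x ∈ Ioo a b, HasDerivAt f (f' x) x)
    (hgd : ∀ x ∈ Ioo a b, HasDerivAt g (g' x) x)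
    (hi : IntervalIntegrable (fun x => f' x * g x + f x * g' x) volume a b) :
    ∫ x in a..b, (f' x * g x + f x * g' x) = f b * g b - f a * g a :=
  ftcIcc hab (hfc.mul hgc) (fun x hx => (hfd x hx).mul (hgd x hx)) hi

lemma upg {a b x : ℝ} {f : ℝ → ℝ} {f' : ℝ} (h : HasDerivWithinAt f f' (Icc a b) x)
    (hx : x ∈ Ioo a b) : HasDerivAt f f' x :=
  h.hasDerivAt (Icc_mem_nhds hx.1 hx.2)

lemma sliceCont1 {F : ℝ → ℝ → ℝ} {S T' : Set ℝ}
    (hF : ContinuousOn (fun q : ℝ × ℝ => F q.1 q.2) (S ×ˢ T')) {t : ℝ} (ht : t ∈ S) :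
    ContinuousOn (F t) T' := by
  intro u hu
  have : ContinuousWithinAt (fun v : ℝ => ((t, v) : ℝ × ℝ)) T' u :=
    (continuous_const.prodMk continuous_id).continuousWithinAt
  exact ContinuousWithinAt.comp (g := fun q : ℝ × ℝ => F q.1 q.2)
    (f := fun v : ℝ => ((t, v) : ℝ × ℝ)) (hF (t, u) ⟨ht, hu⟩) this (fun v hv => ⟨ht, hv⟩)

lemma sliceCont2 {F : ℝ → ℝ → ℝ} {S T' : Set ℝ}
    (hF : ContinuousOn (fun q : ℝ × ℝ => F q.1 q.2) (S ×ˢ T')) {u : ℝ} (hu : u ∈ T') :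
    ContinuousOn (fun t => F t u) S := by
  intro t ht
  have : ContinuousWithinAt (fun s : ℝ => ((s, u) : ℝ × ℝ)) S t :=
    (continuous_id.prodMk continuous_const).continuousWithinAt
  exact ContinuousWithinAt.comp (g := fun q : ℝ × ℝ => F q.1 q.2)
    (f := fun s : ℝ => ((s, u) : ℝ × ℝ)) (hF (t, u) ⟨ht, hu⟩) this (fun s hs => ⟨hs, hu⟩)

lemma prodInt {a b c d : ℝ} {F : ℝ → ℝ → ℝ}
    (hF : ContinuousOn (fun q : ℝ × ℝ => F q.1 q.2) (Icc a b ×ˢ Icc c d)) :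
    Integrable (Function.uncurry F)
      ((volume.restrict (Ioc a b)).prod (volume.restrict (Ioc c d))) := by
  rw [Measure.prod_restrict]
  exact (hF.integrableOn_compact (isCompact_Icc.prod isCompact_Icc)).mono_set
    (Set.prod_mono Ioc_subset_Icc_self Ioc_subset_Icc_self)

lemma marginalInt {a b c d : ℝ} (hab : a ≤ b) (hcd : c ≤ d) {F : ℝ → ℝ → ℝ}
    (hF : ContinuousOn (fun q : ℝ × ℝ => F q.1 q.2) (Icc a b ×ˢ Icc c d)) :
    IntervalIntegrable (fun x => ∫ y in c..d, F x y) volume a b := by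
  have h := (prodInt hF).integral_prod_left
  rw [intervalIntegrable_iff_integrableOn_Ioc_of_le hab]
  simpa only [intervalIntegral.integral_of_le hcd, Function.uncurry_apply_pair, IntegrableOn] using h

lemma swapInt {a b c d : ℝ} (hab : a ≤ b) (hcd : c ≤ d) {F : ℝ → ℝ → ℝ}
    (hF : ContinuousOn (fun q : ℝ × ℝ => F q.1 q.2) (Icc a b ×ˢ Icc c d)) :
    ∫ x in a..b, ∫ y in c..d, F x y = ∫ y in c..d, ∫ x in a..b, F x y := by
  simp only [intervalIntegral.integral_of_le hab, intervalIntegral.integral_of_le hcd]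
  exact MeasureTheory.integral_integral_swap (prodInt hF)

lemma jointCont {H H1 H2 : ℝ → ℝ → ℝ}
    (hdH : ∀ t ∈ Icc (0:ℝ) 1, ∀ u ∈ Icc (-1:ℝ) 1,
      HasDerivWithinAt (H t) (H1 t u) (Icc (-1:ℝ) 1) u)
    (hd : ∀ t ∈ Icc (0:ℝ) 1, ∀ u ∈ Icc (-1:ℝ) 1,
      HasDerivWithinAt (H1 t) (H2 t u) (Icc (-1:ℝ) 1) u)
    (hH2 : ContinuousOn (Function.uncurry H2) (Icc (0:ℝ) 1 ×ˢ Icc (-1:ℝ) 1))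
    (hbd : ∀ t ∈ Icc (0:ℝ) 1, H t (-1) = 0 ∧ H t 1 = 0) :
    ∃ K1 KH : ℝ → ℝ → ℝ, Continuous (fun q : ℝ × ℝ => K1 q.1 q.2) ∧
      Continuous (fun q : ℝ × ℝ => KH q.1 q.2) ∧
      (∀ t ∈ Icc (0:ℝ) 1, ∀ u ∈ Icc (-1:ℝ) 1, H1 t u = K1 t u ∧ H t u = KH t u) := by
  classical
  set s : Set (ℝ × ℝ) := Icc (0:ℝ) 1 ×ˢ Icc (-1:ℝ) 1 with hsdef
  have hs : IsClosed s := isClosed_Icc.prod isClosed_Icc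
  obtain ⟨g, hg⟩ := ContinuousMap.exists_restrict_eq hs
    (⟨s.restrict (Function.uncurry H2), hH2.restrict⟩ : C(s, ℝ))
  have hgeq : ∀ p : ℝ × ℝ, p ∈ s → g p = H2 p.1 p.2 := by
    intro p hp
    exact DFunLike.congr_fun hg (⟨p, hp⟩ : s)
  set K2 : ℝ → ℝ → ℝ := fun t u => g (t, u) with hK2def
  have hK2c : Continuous (Function.uncurry K2) := g.continuous
  have prim : Continuous (fun q : ℝ × ℝ => ∫ v in (-1:ℝ)..q.2, K2 q.1 v) :=
    intervalIntegral.continuous_parametric_primitive_of_continuous (μ := volume) hK2c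
  set Q2 : ℝ → ℝ := fun t => ∫ w in (-1:ℝ)..1, (∫ v in (-1:ℝ)..w, K2 t v) with hQ2def
  have hQ2 : Continuous Q2 :=
    intervalIntegral.continuous_parametric_intervalIntegral_of_continuous'
      (μ := volume) (f := fun t w => ∫ v in (-1:ℝ)..w, K2 t v) prim (-1) 1
  set K1 : ℝ → ℝ → ℝ := fun t u => -(1/2) * Q2 t + ∫ v in (-1:ℝ)..u, K2 t v with hK1def
  have hK1c : Continuous (fun q : ℝ × ℝ => K1 q.1 q.2) :=
    (continuous_const.mul (hQ2.comp continuous_fst)).add prim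
  have primK1 : Continuous (fun q : ℝ × ℝ => ∫ v in (-1:ℝ)..q.2, K1 q.1 v) :=
    intervalIntegral.continuous_parametric_primitive_of_continuous (μ := volume) hK1c
  set KH : ℝ → ℝ → ℝ := fun t u => ∫ v in (-1:ℝ)..u, K1 t v with hKHdef
  refine ⟨K1, KH, hK1c, primK1, ?_⟩
  intro t ht
  -- slice facts
  have hH1c : ContinuousOn (H1 t) (Icc (-1:ℝ) 1) :=
    fun u hu => (hd t ht u hu).continuousWithinAt
  have hHc : ContinuousOn (H t) (Icc (-1:ℝ) 1) :=
    fun u hu => (hdH t ht u hu).continuousWithinAt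
  have hK2eq : ∀ u ∈ Icc (-1:ℝ) 1, K2 t u = H2 t u :=
    fun u hu => hgeq (t, u) ⟨ht, hu⟩
  have hK2tc : Continuous (K2 t) := hK2c.comp (continuous_const.prodMk continuous_id)
  -- step (i)
  have stepi : ∀ u ∈ Icc (-1:ℝ) 1, H1 t u = H1 t (-1) + ∫ v in (-1:ℝ)..u, K2 t v := by
    intro u hu
    have h8 : ∫ v in (-1:ℝ)..u, H2 t v = H1 t u - H1 t (-1) := by
      apply ftcIcc hu.1 (hH1c.mono (Icc_subset_Icc le_rfl hu.2))
      · intro x hx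
        exact upg (hd t ht x ⟨hx.1.le, le_trans hx.2.le hu.2⟩) ⟨hx.1, lt_of_lt_of_le hx.2 hu.2⟩
      · apply iiIcc hu.1
        have : ContinuousOn (H2 t) (Icc (-1:ℝ) u) :=
          ContinuousOn.congr hK2tc.continuousOn
            (fun w hw => (hK2eq w (Icc_subset_Icc le_rfl hu.2 hw)).symm)
        exact this
    have h9 : ∫ v in (-1:ℝ)..u, K2 t v = ∫ v in (-1:ℝ)..u, H2 t v := by
      apply intervalIntegral.integral_congr
      intro v hv
      rw [uIcc_of_le hu.1] at hv
      exact hK2eq v (Icc_subset_Icc le_rfl hu.2 hv)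
    rw [h9, h8]; ring
  -- step (ii)
  have stepii : ∫ v in (-1:ℝ)..1, H1 t v = 0 := by
    have h8 : ∫ v in (-1:ℝ)..1, H1 t v = H t 1 - H t (-1) := by
      apply ftcIcc (by norm_num) hHc
      · intro x hx
        exact upg (hdH t ht x (Ioo_subset_Icc_self hx)) hx
      · exact iiIcc (by norm_num) hH1c
    rw [h8, (hbd t ht).1, (hbd t ht).2]; ring
  -- step (iii)
  have hprimc : Continuous (fun v : ℝ => ∫ w in (-1:ℝ)..v, K2 t w) :=
    intervalIntegral.continuous_primitive (fun a b => (hK2tc).intervalIntegrable a b) (-1)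
  have stepiii : (2:ℝ) * H1 t (-1) + Q2 t = 0 := by
    have h10 : ∫ v in (-1:ℝ)..1, H1 t v
        = ∫ v in (-1:ℝ)..1, (H1 t (-1) + ∫ w in (-1:ℝ)..v, K2 t w) := by
      apply intervalIntegral.integral_congr
      intro v hv
      rw [uIcc_of_le (by norm_num : (-1:ℝ) ≤ 1)] at hv
      exact stepi v hv
    have h11 : ∫ v in (-1:ℝ)..1, (H1 t (-1) + ∫ w in (-1:ℝ)..v, K2 t w)
        = (∫ v in (-1:ℝ)..1, H1 t (-1)) + ∫ v in (-1:ℝ)..1, (∫ w in (-1:ℝ)..v, K2 t w) := by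
      apply intervalIntegral.integral_add intervalIntegrable_const
        (hprimc.intervalIntegrable _ _)
    have h12 : (∫ v in (-1:ℝ)..1, H1 t (-1)) = 2 * H1 t (-1) := by
      rw [intervalIntegral.integral_const, smul_eq_mul]; norm_num
    have h13 := stepii
    rw [h10, h11, h12] at h13
    have hQ2t : Q2 t = ∫ v in (-1:ℝ)..1, (∫ w in (-1:ℝ)..v, K2 t w) := rfl
    rw [hQ2t]
    linarith
  have hH1m : H1 t (-1) = -(1/2) * Q2 t := by linarith
  intro u hu
  constructor
  · rw [stepi u hu, hH1m]
  · -- H t u = KH t u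
    have h8 : ∫ v in (-1:ℝ)..u, H1 t v = H t u - H t (-1) := by
      apply ftcIcc hu.1 (hHc.mono (Icc_subset_Icc le_rfl hu.2))
      · intro x hx
        exact upg (hdH t ht x ⟨hx.1.le, le_trans hx.2.le hu.2⟩) ⟨hx.1, lt_of_lt_of_le hx.2 hu.2⟩
      · exact iiIcc hu.1 (hH1c.mono (Icc_subset_Icc le_rfl hu.2))
    have h9 : ∫ v in (-1:ℝ)..u, K1 t v = ∫ v in (-1:ℝ)..u, H1 t v := by
      apply intervalIntegral.integral_congr
      intro v hv
      rw [uIcc_of_le hu.1] at hv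
      exact ((stepi v (Icc_subset_Icc le_rfl hu.2 hv)).trans (by rw [hH1m])).symm
    rw [(hbd t ht).1] at h8
    show H t u = ∫ v in (-1:ℝ)..u, K1 t v
    rw [h9, h8]; ring

lemma posP1 (h0 : 0 < ρm) (h1 : ρm < ρp) (h2 : ρp < 1)
    (hJeq : (1/2) * (∫ r in ρm..ρp, (E * chi r - J)⁻¹) = 1) :
    ∀ r ∈ Icc ρm ρp, 0 < E * chi r - J := by
  by_contra hcon
  push_neg at hcon
  obtain ⟨r₀, hr₀, hr₀le⟩ := hcon
  have hfc : Continuous fun r => E * chi r - J := by unfold chi; fun_prop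
  by_cases hpos : ∃ r₁ ∈ Icc ρm ρp, 0 < E * chi r₁ - J
  · obtain ⟨r₁, hr₁, hr₁pos⟩ := hpos
    -- IVT : get a root
    have hsub : uIcc r₀ r₁ ⊆ Icc ρm ρp := by
      rw [uIcc]
      exact Icc_subset_Icc (le_min hr₀.1 hr₁.1) (max_le hr₀.2 hr₁.2)
    have h0mem : (0:ℝ) ∈ uIcc (E * chi r₀ - J) (E * chi r₁ - J) := by
      rw [mem_uIcc]; left; exact ⟨hr₀le, hr₁pos.le⟩
    obtain ⟨rs, hrsmem, hrs⟩ := intermediate_value_uIcc (hfc.continuousOn) h0mem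
    have hrsIcc : rs ∈ Icc ρm ρp := hsub hrsmem
    by_cases hE : E = 0
    · have hJ : J = 0 := by simp [hE] at hrs; linarith
      rw [hE, hJ] at hJeq; simp at hJeq
    · -- factorization and non-integrability
      have hfact : ∀ x : ℝ, E * chi x - J = E * (x - rs) * (1 - x - rs) := by
        intro x; unfold chi at hrs ⊢; linear_combination hrs
      have hrs01 : (0:ℝ) ≤ rs ∧ rs ≤ 1 := ⟨le_trans h0.le hrsIcc.1, le_trans hrsIcc.2 h2.le⟩
      have hEabs : 0 < |E| := abs_pos.2 hE
      have hO : (fun x => (x - rs)⁻¹) =O[𝓝[≠] rs] (fun r => (E * chi r - J)⁻¹) := by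
        rw [Asymptotics.isBigO_iff]
        refine ⟨2 * |E|, ?_⟩
        have hne2 : ∀ᶠ x in 𝓝[≠] rs, (1 - x - rs) ≠ 0 := by
          by_cases hs : 1 - 2 * rs = 0
          · filter_upwards [self_mem_nhdsWithin] with x hx
            intro hcon2
            exact hx (by simp only [mem_singleton_iff]; linarith)
          · have : ∀ᶠ x in 𝓝 rs, (1 - x - rs) ≠ 0 := by
              have hca : ContinuousAt (fun x : ℝ => 1 - x - rs) rs := by fun_prop
              exact hca.eventually_ne (fun hh => hs (by linarith [hh]))
            exact this.filter_mono nhdsWithin_le_nhds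
        have hcl : ∀ᶠ x in 𝓝[≠] rs, |x - rs| ≤ 1 := by
          have : ∀ᶠ x in 𝓝 rs, |x - rs| ≤ 1 := by
            filter_upwards [Metric.closedBall_mem_nhds rs zero_lt_one] with x hx
            simpa [Real.dist_eq] using hx
          exact this.filter_mono nhdsWithin_le_nhds
        filter_upwards [self_mem_nhdsWithin, hne2, hcl] with x hx1 hx2 hx3
        have hxne : x - rs ≠ 0 := sub_ne_zero.2 hx1
        have hxpos : 0 < |x - rs| := abs_pos.2 hxne
        have hb : |1 - x - rs| ≤ 2 := by
          have heq : |1 - x - rs| = |(1 - 2*rs) + (rs - x)| := by congr 1; ring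
          have h13 : |(1 - 2*rs) + (rs - x)| ≤ |1 - 2*rs| + |rs - x| := abs_add_le _ _
          have h12 : |1 - 2*rs| ≤ 1 := by rw [abs_le]; constructor <;> linarith [hrs01.1, hrs01.2]
          have h14 : |rs - x| ≤ 1 := by rw [abs_sub_comm]; exact hx3
          linarith [heq ▸ h13]
        have hfle : |E * chi x - J| ≤ (2 * |E|) * |x - rs| := by
          rw [hfact x, abs_mul, abs_mul]
          calc |E| * |x - rs| * |1 - x - rs| ≤ |E| * |x - rs| * 2 :=
                mul_le_mul_of_nonneg_left hb (by positivity)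
          _ = 2 * |E| * |x - rs| := by ring
        have hfne : E * chi x - J ≠ 0 := by
          rw [hfact x]; exact mul_ne_zero (mul_ne_zero hE hxne) hx2
        have hfpos : 0 < |E * chi x - J| := abs_pos.2 hfne
        rw [norm_inv, norm_inv, Real.norm_eq_abs, Real.norm_eq_abs]
        have key : (2 * |E| * |x - rs|)⁻¹ ≤ |E * chi x - J|⁻¹ :=
          inv_anti₀ hfpos hfle
        calc |x - rs|⁻¹ = 2 * |E| * (2 * |E| * |x - rs|)⁻¹ := by
              field_simp
          _ ≤ 2 * |E| * |E * chi x - J|⁻¹ :=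
              mul_le_mul_of_nonneg_left key (by positivity)
      have hni := not_intervalIntegrable_of_sub_inv_isBigO_punctured hO h1.ne
        (by rw [uIcc_of_le h1.le]; exact hrsIcc)
      rw [intervalIntegral.integral_undef hni] at hJeq
      norm_num at hJeq
  · push_neg at hpos
    have : (∫ r in ρm..ρp, (E * chi r - J)⁻¹) ≤ 0 := by
      by_cases hii : IntervalIntegrable (fun r => (E * chi r - J)⁻¹) volume ρm ρp
      · have h00 : (∫ r in ρm..ρp, (0:ℝ)) = 0 := by simp
        rw [← h00]
        apply intervalIntegral.integral_mono_on h1.le hii (intervalIntegrable_const)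
        intro x hx
        exact inv_nonpos.2 (hpos x hx)
      · rw [intervalIntegral.integral_undef hii]
    linarith

lemma rbOne (h0 : 0 < ρm) (h1 : ρm < ρp) (h2 : ρp < 1)
    (hpos : ∀ r ∈ Icc ρm ρp, 0 < E * chi r - J)
    (hJeq : (1/2) * (∫ r in ρm..ρp, (E * chi r - J)⁻¹) = 1)
    {ρb : ℝ → ℝ} (hρb0 : ρb (-1) = ρm)
    (hρbode : ∀ u ∈ Icc (-1:ℝ) 1,
      HasDerivWithinAt ρb (E * chi (ρb u) - J) (Icc (-1:ℝ) 1) u)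
    (hρbrange : ∀ u ∈ Icc (-1:ℝ) 1, ρb u ∈ Icc ρm ρp) : ρb 1 = ρp := by
  have hm1 : ((-1:ℝ)) ≤ 1 := by norm_num
  have hρbc : ContinuousOn ρb (Icc (-1:ℝ) 1) := fun u hu => (hρbode u hu).continuousWithinAt
  set k : ℝ → ℝ := fun r => (E * chi r - J)⁻¹ with hk
  have hkc : ContinuousOn k (Icc ρm ρp) := by
    apply ContinuousOn.inv₀ (by unfold chi; fun_prop)
    exact fun r hr => ne_of_gt (hpos r hr)
  -- strict monotonicity of ρb
  have hmono : StrictMonoOn ρb (Icc (-1:ℝ) 1) := by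
    apply strictMonoOn_of_deriv_pos (convex_Icc _ _) hρbc
    intro x hx
    rw [interior_Icc] at hx
    rw [(upg (hρbode x (Ioo_subset_Icc_self hx)) hx).deriv]
    exact hpos _ (hρbrange x (Ioo_subset_Icc_self hx))
  have hintr : ∀ u ∈ Ioo (-1:ℝ) 1, ρb u ∈ Ioo ρm ρp := by
    intro u hu
    constructor
    · rw [← hρb0]
      exact hmono (left_mem_Icc.2 hm1) (Ioo_subset_Icc_self hu) hu.1
    · exact lt_of_lt_of_le
        (hmono (Ioo_subset_Icc_self hu) (right_mem_Icc.2 hm1) hu.2)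
        (hρbrange 1 (right_mem_Icc.2 hm1)).2
  set F : ℝ → ℝ := fun x => ∫ r in ρm..x, k r with hF
  have hFc : ContinuousOn F (Icc ρm ρp) := by
    have := intervalIntegral.continuousOn_primitive_interval
      (μ := volume) (f := k) (a := ρm) (b := ρp) ?_
    · rwa [uIcc_of_le h1.le] at this
    · rw [uIcc_of_le h1.le]; exact hkc.integrableOn_Icc
  have hkey : (∫ u in (-1:ℝ)..1, (1:ℝ)) = F (ρb 1) - F (ρb (-1)) := by
    apply ftcIcc hm1 (hFc.comp hρbc (fun u hu => hρbrange u hu))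
    · intro x hx
      have hx' : ρb x ∈ Ioo ρm ρp := hintr x hx
      have h4 : HasDerivAt F (k (ρb x)) (ρb x) := by
        apply intervalIntegral.integral_hasDerivAt_right
        · exact iiIcc hx'.1.le (hkc.mono (Icc_subset_Icc le_rfl hx'.2.le))
        · exact ContinuousOn.stronglyMeasurableAtFilter isOpen_Ioo
            (hkc.mono Ioo_subset_Icc_self) (ρb x) hx'
        · exact hkc.continuousAt (Icc_mem_nhds hx'.1 hx'.2)
      have h5 : HasDerivAt ρb (E * chi (ρb x) - J) x :=
        upg (hρbode x (Ioo_subset_Icc_self hx)) hx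
      have h6 := h4.comp x h5
      have h7 : k (ρb x) * (E * chi (ρb x) - J) = 1 :=
        inv_mul_cancel₀ (ne_of_gt (hpos _ (hρbrange x (Ioo_subset_Icc_self hx))))
      rw [h7] at h6
      exact h6
    · exact intervalIntegrable_const
  have hF0 : F (ρb (-1)) = 0 := by rw [hρb0, hF]; simp
  have hFρb1 : F (ρb 1) = 2 := by
    rw [hF0] at hkey
    have : (∫ u in (-1:ℝ)..1, (1:ℝ)) = 2 := by simp; norm_num
    linarith [hkey]
  have hFρp : F ρp = 2 := by
    have : F ρp = ∫ r in ρm..ρp, (E * chi r - J)⁻¹ := rfl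
    linarith [hJeq]
  have hFmono : StrictMonoOn F (Icc ρm ρp) := by
    intro x hx y hy hxy
    have hix : IntervalIntegrable k volume ρm x := iiIcc hx.1 (hkc.mono (Icc_subset_Icc le_rfl hx.2))
    have hiy : IntervalIntegrable k volume ρm y := iiIcc hy.1 (hkc.mono (Icc_subset_Icc le_rfl hy.2))
    have hsub : (∫ r in x..y, k r) = F y - F x := by
      exact (intervalIntegral.integral_interval_sub_left hiy hix).symm
    have hposxy : 0 < ∫ r in x..y, k r := by
      apply intervalIntegral.intervalIntegral_pos_of_pos_on
        (iiIcc hxy.le (hkc.mono (Icc_subset_Icc hx.1 hy.2)))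
      · intro z hz
        exact inv_pos.2 (hpos z ⟨le_trans hx.1 hz.1.le, le_trans hz.2.le hy.2⟩)
      · exact hxy
    linarith [hsub ▸ hposxy]
  have h1mem : ρb 1 ∈ Icc ρm ρp := hρbrange 1 (right_mem_Icc.2 hm1)
  have hpmem : ρp ∈ Icc ρm ρp := right_mem_Icc.2 h1.le
  exact hFmono.injOn h1mem hpmem (by rw [hFρb1, hFρp])

private theorem main_bound (ρm ρp E J δ : ℝ)
    (h0 : 0 < ρm) (h1 : ρm < ρp) (h2 : ρp < 1) (hδ0 : 0 < δ) (hδ1 : δ < 1)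
    (hpos : ∀ r ∈ Icc ρm ρp, 0 < E * chi r - J)
    (ρb : ℝ → ℝ) (hρb0 : ρb (-1) = ρm) (hρb1 : ρb 1 = ρp)
    (hρbode : ∀ u ∈ Set.Icc (-1:ℝ) 1,
      HasDerivWithinAt ρb (E * chi (ρb u) - J) (Set.Icc (-1:ℝ) 1) u)
    (hρbrange : ∀ u ∈ Set.Icc (-1:ℝ) 1, ρb u ∈ Set.Icc ρm ρp)
    (ρ dρ : ℝ → ℝ)
    (hρd : ∀ u ∈ Set.Icc (-1:ℝ) 1, HasDerivWithinAt ρ (dρ u) (Set.Icc (-1:ℝ) 1) u)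
    (hdρc : ContinuousOn dρ (Set.Icc (-1:ℝ) 1))
    (hρm1 : ρ (-1) = ρm) (hρp1 : ρ 1 = ρp)
    (hρrange : ∀ u ∈ Set.Icc (-1:ℝ) 1, δ ≤ ρ u ∧ ρ u ≤ 1 - δ)
    (H Ht H1 H2 : ℝ → ℝ → ℝ)
    (hder : ∀ t ∈ Set.Icc (0:ℝ) 1, ∀ u ∈ Set.Icc (-1:ℝ) 1,
      HasDerivWithinAt (fun s => H s u) (Ht t u) (Set.Icc (0:ℝ) 1) t ∧
      HasDerivWithinAt (H t) (H1 t u) (Set.Icc (-1:ℝ) 1) u ∧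
      HasDerivWithinAt (H1 t) (H2 t u) (Set.Icc (-1:ℝ) 1) u)
    (hHtc : ContinuousOn (Function.uncurry Ht) (Set.Icc (0:ℝ) 1 ×ˢ Set.Icc (-1:ℝ) 1))
    (hH2c : ContinuousOn (Function.uncurry H2) (Set.Icc (0:ℝ) 1 ×ˢ Set.Icc (-1:ℝ) 1))
    (hbdry : ∀ t ∈ Set.Icc (0:ℝ) 1, H t (-1) = 0 ∧ H t 1 = 0)
    :
    (∫ u in (-1:ℝ)..1, (fun t u => ρb u + t * (ρ u - ρb u)) 1 u * H 1 u)
      - (∫ u in (-1:ℝ)..1, ρb u * H 0 u)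
      - (∫ t in (0:ℝ)..1, ∫ u in (-1:ℝ)..1, (fun t u => ρb u + t * (ρ u - ρb u)) t u * Ht t u)
      - (1/2) * (∫ t in (0:ℝ)..1, ∫ u in (-1:ℝ)..1,
          (fun t u => ρb u + t * (ρ u - ρb u)) t u * H2 t u)
      + (ρp/2) * (∫ t in (0:ℝ)..1, H1 t 1)
      - (ρm/2) * (∫ t in (0:ℝ)..1, H1 t (-1))
      - (E/2) * (∫ t in (0:ℝ)..1, ∫ u in (-1:ℝ)..1,
          chi ((fun t u => ρb u + t * (ρ u - ρb u)) t u) * H1 t u)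
      - (1/2) * (∫ t in (0:ℝ)..1, ∫ u in (-1:ℝ)..1,
          chi ((fun t u => ρb u + t * (ρ u - ρb u)) t u) * (H1 t u)^2) ≤
      (3 + |E|)^2 / (min δ ρm * (1 - max (1-δ) ρp)) *
      (sSup ((fun u => |ρ u - ρb u|) '' Set.Icc (-1:ℝ) 1)
        + sSup ((fun u => |dρ u - (E * chi (ρb u) - J)|) '' Set.Icc (-1:ℝ) 1))^2 := by
  have h01 : (0:ℝ) ≤ 1 := zero_le_one
  have hm11 : (-1:ℝ) ≤ 1 := by norm_num
  have ht1 : (1:ℝ) ∈ Icc (0:ℝ) 1 := by constructor <;> norm_num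
  have ht0 : (0:ℝ) ∈ Icc (0:ℝ) 1 := by constructor <;> norm_num
  have hu1 : (1:ℝ) ∈ Icc (-1:ℝ) 1 := by constructor <;> norm_num
  have hum1 : (-1:ℝ) ∈ Icc (-1:ℝ) 1 := by constructor <;> norm_num
  have hdt : ∀ t ∈ Icc (0:ℝ) 1, ∀ u ∈ Icc (-1:ℝ) 1,
      HasDerivWithinAt (fun s => H s u) (Ht t u) (Icc (0:ℝ) 1) t :=
    fun t ht u hu => (hder t ht u hu).1
  have hdu : ∀ t ∈ Icc (0:ℝ) 1, ∀ u ∈ Icc (-1:ℝ) 1,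
      HasDerivWithinAt (H t) (H1 t u) (Icc (-1:ℝ) 1) u :=
    fun t ht u hu => (hder t ht u hu).2.1
  have hdu2 : ∀ t ∈ Icc (0:ℝ) 1, ∀ u ∈ Icc (-1:ℝ) 1,
      HasDerivWithinAt (H1 t) (H2 t u) (Icc (-1:ℝ) 1) u :=
    fun t ht u hu => (hder t ht u hu).2.2
  obtain ⟨K1, KH, hK1c, hKHc, hK1KH⟩ := jointCont hdu hdu2 hH2c hbdry
  have hH1j : ContinuousOn (fun q : ℝ × ℝ => H1 q.1 q.2) (Icc (0:ℝ) 1 ×ˢ Icc (-1:ℝ) 1) :=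
    (hK1c.continuousOn).congr (fun q hq => (hK1KH q.1 hq.1 q.2 hq.2).1)
  have hHj : ContinuousOn (fun q : ℝ × ℝ => H q.1 q.2) (Icc (0:ℝ) 1 ×ˢ Icc (-1:ℝ) 1) :=
    (hKHc.continuousOn).congr (fun q hq => (hK1KH q.1 hq.1 q.2 hq.2).2)
  have hρbc : ContinuousOn ρb (Icc (-1:ℝ) 1) := fun u hu => (hρbode u hu).continuousWithinAt
  have hρc : ContinuousOn ρ (Icc (-1:ℝ) 1) := fun u hu => (hρd u hu).continuousWithinAt
  have hgc : ContinuousOn (fun u => ρ u - ρb u) (Icc (-1:ℝ) 1) := hρc.sub hρbc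
  have hchi : Continuous chi := by unfold chi; fun_prop
  have hρb'c : ContinuousOn (fun u => E * chi (ρb u) - J) (Icc (-1:ℝ) 1) :=
    (continuousOn_const.mul (hchi.comp_continuousOn hρbc)).sub continuousOn_const
  set X1 := sSup ((fun u => |ρ u - ρb u|) '' Set.Icc (-1:ℝ) 1) with hX1def
  set X2 := sSup ((fun u => |dρ u - (E * chi (ρb u) - J)|) '' Set.Icc (-1:ℝ) 1) with hX2def
  have hX1 : ∀ u ∈ Icc (-1:ℝ) 1, |ρ u - ρb u| ≤ X1 := fun u hu =>
    le_csSup (isCompact_Icc.bddAbove_image hgc.abs) ⟨u, hu, rfl⟩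
  have hX2 : ∀ u ∈ Icc (-1:ℝ) 1, |dρ u - (E * chi (ρb u) - J)| ≤ X2 := fun u hu =>
    le_csSup (isCompact_Icc.bddAbove_image (hdρc.sub hρb'c).abs) ⟨u, hu, rfl⟩
  have hX1nn : 0 ≤ X1 := le_trans (abs_nonneg _) (hX1 (-1) hum1)
  have hX2nn : 0 ≤ X2 := le_trans (abs_nonneg _) (hX2 (-1) hum1)
  set p : ℝ → ℝ → ℝ := fun t u => ρb u + t * (ρ u - ρb u) with hpdef
  set K : ℝ := 3 + |E| with hKdef
  have hKpos : 0 < K := by positivity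
  set c₀ : ℝ := min δ ρm * (1 - max (1-δ) ρp) with hc₀def
  have hM1 : max (1-δ) ρp < 1 := max_lt (by linarith) h2
  have hm0 : 0 < min δ ρm := lt_min hδ0 h0
  have hc₀pos : 0 < c₀ := mul_pos hm0 (by linarith)
  set X := X1 + X2 with hXdef
  have hXnn : 0 ≤ X := by positivity
  -- continuity of p
  have hptc : ∀ t : ℝ, ContinuousOn (fun u => p t u) (Icc (-1:ℝ) 1) :=
    fun t => hρbc.add (continuousOn_const.mul (hρc.sub hρbc))
  have hpj : ContinuousOn (fun q : ℝ × ℝ => p q.1 q.2) (Icc (0:ℝ) 1 ×ˢ Icc (-1:ℝ) 1) := by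
    have hb2 : ContinuousOn (fun q : ℝ × ℝ => ρb q.2) (Icc (0:ℝ) 1 ×ˢ Icc (-1:ℝ) 1) :=
      hρbc.comp continuous_snd.continuousOn (fun q hq => hq.2)
    have hr2 : ContinuousOn (fun q : ℝ × ℝ => ρ q.2) (Icc (0:ℝ) 1 ×ˢ Icc (-1:ℝ) 1) :=
      hρc.comp continuous_snd.continuousOn (fun q hq => hq.2)
    exact hb2.add (continuous_fst.continuousOn.mul (hr2.sub hb2))
  -- range of p
  have hmrange : ∀ t ∈ Icc (0:ℝ) 1, ∀ u ∈ Icc (-1:ℝ) 1,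
      min δ ρm ≤ p t u ∧ p t u ≤ max (1-δ) ρp := by
    intro t ht u hu
    have hb := hρbrange u hu
    have hr := hρrange u hu
    have e1 : 0 ≤ (1 - t) * (ρb u - min δ ρm) :=
      mul_nonneg (by linarith [ht.2]) (by linarith [min_le_right δ ρm, hb.1])
    have e2 : 0 ≤ t * (ρ u - min δ ρm) :=
      mul_nonneg ht.1 (by linarith [min_le_left δ ρm, hr.1])
    have e3 : 0 ≤ (1 - t) * (max (1-δ) ρp - ρb u) :=
      mul_nonneg (by linarith [ht.2]) (by linarith [le_max_right (1-δ) ρp, hb.2])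
    have e4 : 0 ≤ t * (max (1-δ) ρp - ρ u) :=
      mul_nonneg ht.1 (by linarith [le_max_left (1-δ) ρp, hr.2])
    constructor
    · simp only [hpdef]; nlinarith [e1, e2]
    · simp only [hpdef]; nlinarith [e3, e4]
  have hchi_lb : ∀ t ∈ Icc (0:ℝ) 1, ∀ u ∈ Icc (-1:ℝ) 1, c₀ ≤ chi (p t u) := by
    intro t ht u hu
    have hr := hmrange t ht u hu
    have e1 : 0 ≤ (p t u - min δ ρm) * (1 - p t u) :=
      mul_nonneg (by linarith [hr.1]) (by linarith [hr.2])
    have e2 : 0 ≤ min δ ρm * (max (1-δ) ρp - p t u) :=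
      mul_nonneg hm0.le (by linarith [hr.2])
    show c₀ ≤ p t u * (1 - p t u)
    rw [hc₀def]; nlinarith [e1, e2]
  -- G
  set G : ℝ → ℝ := fun u => ∫ v in (-1:ℝ)..u, (ρ v - ρb v) with hGdef
  have hGc : ContinuousOn G (Icc (-1:ℝ) 1) := by
    have := intervalIntegral.continuousOn_primitive_interval (μ := volume)
      (f := fun v => ρ v - ρb v) (a := -1) (b := 1)
      (by rw [uIcc_of_le hm11]; exact hgc.integrableOn_Icc)
    rwa [uIcc_of_le hm11] at this
  have hGd : ∀ x ∈ Ioo (-1:ℝ) 1, HasDerivAt G (ρ x - ρb x) x := by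
    intro x hx
    apply intervalIntegral.integral_hasDerivAt_right
      (iiIcc hx.1.le (hgc.mono (Icc_subset_Icc le_rfl hx.2.le)))
      (ContinuousOn.stronglyMeasurableAtFilter isOpen_Ioo (hgc.mono Ioo_subset_Icc_self) x hx)
      (hgc.continuousAt (Icc_mem_nhds hx.1 hx.2))
  have hGbound : ∀ u ∈ Icc (-1:ℝ) 1, |G u| ≤ 2 * X1 := by
    intro u hu
    have habs : |∫ v in (-1:ℝ)..u, (ρ v - ρb v)| ≤ ∫ v in (-1:ℝ)..u, |ρ v - ρb v| :=
      intervalIntegral.abs_integral_le_integral_abs hu.1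
    have hmono : (∫ v in (-1:ℝ)..u, |ρ v - ρb v|) ≤ ∫ v in (-1:ℝ)..u, X1 :=
      intervalIntegral.integral_mono_on hu.1
        (iiIcc hu.1 ((hgc.mono (Icc_subset_Icc le_rfl hu.2)).abs))
        intervalIntegrable_const
        (fun v hv => hX1 v (Icc_subset_Icc le_rfl hu.2 hv))
    rw [intervalIntegral.integral_const, smul_eq_mul] at hmono
    have h2' : (u - (-1)) * X1 ≤ 2 * X1 := by nlinarith [hu.2, hX1nn]
    calc |G u| ≤ _ := habs
    _ ≤ 2 * X1 := by linarith
  -- boundary values of p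
  have hpb1 : ∀ t : ℝ, p t 1 = ρp := by
    intro t; simp only [hpdef]; rw [hρb1, hρp1]; ring
  have hpbm : ∀ t : ℝ, p t (-1) = ρm := by
    intro t; simp only [hpdef]; rw [hρb0, hρm1]; ring
  -- slice continuity
  have hH1tc : ∀ t ∈ Icc (0:ℝ) 1, ContinuousOn (H1 t) (Icc (-1:ℝ) 1) :=
    fun t ht => sliceCont1 hH1j ht
  have hH2tc : ∀ t ∈ Icc (0:ℝ) 1, ContinuousOn (H2 t) (Icc (-1:ℝ) 1) :=
    fun t ht => sliceCont1 hH2c ht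
  have hHtc' : ∀ t ∈ Icc (0:ℝ) 1, ContinuousOn (H t) (Icc (-1:ℝ) 1) :=
    fun t ht u hu => (hdu t ht u hu).continuousWithinAt
  have hHttc : ∀ u ∈ Icc (-1:ℝ) 1, ContinuousOn (fun t => Ht t u) (Icc (0:ℝ) 1) :=
    fun u hu => sliceCont2 hHtc hu
  have hHuc : ∀ u ∈ Icc (-1:ℝ) 1, ContinuousOn (fun t => H t u) (Icc (0:ℝ) 1) :=
    fun u hu t ht => (hdt t ht u hu).continuousWithinAt
  -- pu and cc
  set pu : ℝ → ℝ → ℝ :=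
    fun t u => (E * chi (ρb u) - J) + t * (dρ u - (E * chi (ρb u) - J)) with hpudef
  set cc : ℝ → ℝ → ℝ := fun t u => -G u + (t/2) * (dρ u - (E * chi (ρb u) - J))
    + (E/2) * (chi (ρb u) - chi (p t u)) with hccdef
  have hputc : ∀ t : ℝ, ContinuousOn (fun u => pu t u) (Icc (-1:ℝ) 1) :=
    fun t => hρb'c.add (continuousOn_const.mul (hdρc.sub hρb'c))
  have hcctc : ∀ t : ℝ, ContinuousOn (fun u => cc t u) (Icc (-1:ℝ) 1) :=
    fun t => ((hGc.neg).add (continuousOn_const.mul (hdρc.sub hρb'c))).add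
      (continuousOn_const.mul ((hchi.comp_continuousOn hρbc).sub
        (hchi.comp_continuousOn (hptc t))))
  -- time FTC per u
  have hA : ∀ u ∈ Icc (-1:ℝ) 1,
      (∫ t in (0:ℝ)..1, ((ρ u - ρb u) * H t u + p t u * Ht t u))
        = p 1 u * H 1 u - ρb u * H 0 u := by
    intro u hu
    have hptuc : ContinuousOn (fun t => p t u) (Icc (0:ℝ) 1) :=
      continuousOn_const.add (continuousOn_id.mul continuousOn_const)
    have hcont : ContinuousOn (fun t => p t u * H t u) (Icc (0:ℝ) 1) :=
      hptuc.mul (hHuc u hu)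
    have hder' : ∀ t ∈ Ioo (0:ℝ) 1, HasDerivAt (fun t => p t u * H t u)
        ((ρ u - ρb u) * H t u + p t u * Ht t u) t := by
      intro t htI
      have h5 : HasDerivAt (fun t : ℝ => p t u) (ρ u - ρb u) t := by
        have := ((hasDerivAt_id t).mul_const (ρ u - ρb u)).const_add (ρb u)
        simpa [hpdef] using this
      have h6 : HasDerivAt (fun s => H s u) (Ht t u) t :=
        upg (hdt t (Ioo_subset_Icc_self htI) u hu) htI
      exact h5.mul h6
    have hint : IntervalIntegrable (fun t => (ρ u - ρb u) * H t u + p t u * Ht t u)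
        volume 0 1 :=
      iiIcc h01 ((continuousOn_const.mul (hHuc u hu)).add (hptuc.mul (hHttc u hu)))
    have h7 := ftcIcc h01 hcont hder' hint
    rw [h7]
    have hp0 : p 0 u = ρb u := by simp [hpdef]
    rw [hp0]
  have hiiA1 : IntervalIntegrable (fun u => p 1 u * H 1 u) volume (-1) 1 :=
    iiIcc hm11 ((hptc 1).mul (hHtc' 1 ht1))
  have hiiA2 : IntervalIntegrable (fun u => ρb u * H 0 u) volume (-1) 1 :=
    iiIcc hm11 (hρbc.mul (hHtc' 0 ht0))
  have hA2 : (∫ u in (-1:ℝ)..1, p 1 u * H 1 u) - (∫ u in (-1:ℝ)..1, ρb u * H 0 u)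
      = ∫ u in (-1:ℝ)..1, ∫ t in (0:ℝ)..1, ((ρ u - ρb u) * H t u + p t u * Ht t u) := by
    rw [← intervalIntegral.integral_sub hiiA1 hiiA2]
    apply intervalIntegral.integral_congr
    intro u hu; rw [uIcc_of_le hm11] at hu
    exact (hA u hu).symm
  -- joint continuity for (u,t) order
  have hgHj : ContinuousOn (fun q : ℝ × ℝ => (ρ q.1 - ρb q.1) * H q.2 q.1)
      (Icc (-1:ℝ) 1 ×ˢ Icc (0:ℝ) 1) := by
    have h7 : ContinuousOn (fun q : ℝ × ℝ => H q.2 q.1) (Icc (-1:ℝ) 1 ×ˢ Icc (0:ℝ) 1) :=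
      hHj.comp continuous_swap.continuousOn (fun q hq => ⟨hq.2, hq.1⟩)
    exact (hgc.comp continuous_fst.continuousOn (fun q hq => hq.1)).mul h7
  have hpHtj : ContinuousOn (fun q : ℝ × ℝ => p q.2 q.1 * Ht q.2 q.1)
      (Icc (-1:ℝ) 1 ×ˢ Icc (0:ℝ) 1) := by
    have h7 : ContinuousOn (fun q : ℝ × ℝ => p q.2 q.1) (Icc (-1:ℝ) 1 ×ˢ Icc (0:ℝ) 1) :=
      hpj.comp continuous_swap.continuousOn (fun q hq => ⟨hq.2, hq.1⟩)
    have h8 : ContinuousOn (fun q : ℝ × ℝ => Ht q.2 q.1) (Icc (-1:ℝ) 1 ×ˢ Icc (0:ℝ) 1) :=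
      hHtc.comp continuous_swap.continuousOn (fun q hq => ⟨hq.2, hq.1⟩)
    exact h7.mul h8
  have hsplitA : (∫ u in (-1:ℝ)..1, ∫ t in (0:ℝ)..1, ((ρ u - ρb u) * H t u + p t u * Ht t u))
      = (∫ u in (-1:ℝ)..1, ∫ t in (0:ℝ)..1, (ρ u - ρb u) * H t u)
        + ∫ u in (-1:ℝ)..1, ∫ t in (0:ℝ)..1, p t u * Ht t u := by
    rw [← intervalIntegral.integral_add (marginalInt hm11 h01 hgHj) (marginalInt hm11 h01 hpHtj)]
    apply intervalIntegral.integral_congr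
    intro u hu; rw [uIcc_of_le hm11] at hu
    have hptuc : ContinuousOn (fun t => p t u) (Icc (0:ℝ) 1) :=
      continuousOn_const.add (continuousOn_id.mul continuousOn_const)
    exact intervalIntegral.integral_add
      (iiIcc h01 (continuousOn_const.mul (hHuc u hu)))
      (iiIcc h01 (hptuc.mul (hHttc u hu)))
  have hswap1 : (∫ u in (-1:ℝ)..1, ∫ t in (0:ℝ)..1, (ρ u - ρb u) * H t u)
      = ∫ t in (0:ℝ)..1, ∫ u in (-1:ℝ)..1, (ρ u - ρb u) * H t u :=
    swapInt hm11 h01 hgHj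
  have hswap2 : (∫ u in (-1:ℝ)..1, ∫ t in (0:ℝ)..1, p t u * Ht t u)
      = ∫ t in (0:ℝ)..1, ∫ u in (-1:ℝ)..1, p t u * Ht t u :=
    swapInt hm11 h01 hpHtj
  have hfirst : (∫ u in (-1:ℝ)..1, p 1 u * H 1 u) - (∫ u in (-1:ℝ)..1, ρb u * H 0 u)
      - (∫ t in (0:ℝ)..1, ∫ u in (-1:ℝ)..1, p t u * Ht t u)
      = ∫ t in (0:ℝ)..1, ∫ u in (-1:ℝ)..1, (ρ u - ρb u) * H t u := by
    rw [hA2, hsplitA, hswap1, hswap2]; ring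
  -- by parts in u, per t
  have hbp2 : ∀ t ∈ Icc (0:ℝ) 1, (∫ u in (-1:ℝ)..1, p t u * H2 t u)
      = ρp * H1 t 1 - ρm * H1 t (-1) - ∫ u in (-1:ℝ)..1, pu t u * H1 t u := by
    intro t ht
    have hpd : ∀ x ∈ Ioo (-1:ℝ) 1, HasDerivAt (fun u => p t u) (pu t x) x := by
      intro x hx
      have h5 : HasDerivAt ρb (E * chi (ρb x) - J) x :=
        upg (hρbode x (Ioo_subset_Icc_self hx)) hx
      have h6 : HasDerivAt ρ (dρ x) x := upg (hρd x (Ioo_subset_Icc_self hx)) hx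
      have h7 := h5.add ((h6.sub h5).const_mul t)
      simp only [hpdef, hpudef]; exact h7
    have hint : IntervalIntegrable (fun u => pu t u * H1 t u + p t u * H2 t u)
        volume (-1) 1 :=
      iiIcc hm11 (((hputc t).mul (hH1tc t ht)).add ((hptc t).mul (hH2tc t ht)))
    have h8 := byParts hm11 (hptc t) (hH1tc t ht) hpd
      (fun x hx => upg (hdu2 t ht x (Ioo_subset_Icc_self hx)) hx) hint
    rw [hpb1 t, hpbm t] at h8
    have h9 : (∫ u in (-1:ℝ)..1, (pu t u * H1 t u + p t u * H2 t u))
        = (∫ u in (-1:ℝ)..1, pu t u * H1 t u) + ∫ u in (-1:ℝ)..1, p t u * H2 t u :=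
      intervalIntegral.integral_add (iiIcc hm11 ((hputc t).mul (hH1tc t ht)))
        (iiIcc hm11 ((hptc t).mul (hH2tc t ht)))
    rw [h9] at h8
    linarith
  have hbp0 : ∀ t ∈ Icc (0:ℝ) 1, (∫ u in (-1:ℝ)..1, (ρ u - ρb u) * H t u)
      = - ∫ u in (-1:ℝ)..1, G u * H1 t u := by
    intro t ht
    have h8 := byParts hm11 hGc (hHtc' t ht) hGd
      (fun x hx => upg (hdu t ht x (Ioo_subset_Icc_self hx)) hx)
      (iiIcc hm11 ((hgc.mul (hHtc' t ht)).add (hGc.mul (hH1tc t ht))))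
    rw [(hbdry t ht).1, (hbdry t ht).2] at h8
    have h9 : (∫ u in (-1:ℝ)..1, ((ρ u - ρb u) * H t u + G u * H1 t u))
        = (∫ u in (-1:ℝ)..1, (ρ u - ρb u) * H t u) + ∫ u in (-1:ℝ)..1, G u * H1 t u :=
      intervalIntegral.integral_add (iiIcc hm11 (hgc.mul (hHtc' t ht)))
        (iiIcc hm11 (hGc.mul (hH1tc t ht)))
    rw [h9] at h8
    have h10 : G 1 * 0 - G (-1) * 0 = 0 := by ring
    linarith
  have hzero : ∀ t ∈ Icc (0:ℝ) 1, (∫ u in (-1:ℝ)..1, H1 t u) = 0 := by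
    intro t ht
    have h8 := ftcIcc hm11 (hHtc' t ht)
      (fun x hx => upg (hdu t ht x (Ioo_subset_Icc_self hx)) hx)
      (iiIcc hm11 (hH1tc t ht))
    rw [(hbdry t ht).1, (hbdry t ht).2] at h8
    simpa using h8
  clear_value p pu cc G K c₀ X X1 X2
  -- marginal integrabilities in t
  have hm2' : IntervalIntegrable (fun t => ∫ u in (-1:ℝ)..1, p t u * H2 t u) volume 0 1 :=
    marginalInt h01 hm11 (hpj.mul hH2c)
  have hm5' : IntervalIntegrable (fun t => ∫ u in (-1:ℝ)..1, chi (p t u) * H1 t u) volume 0 1 :=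
    marginalInt h01 hm11 ((hchi.comp_continuousOn hpj).mul hH1j)
  have hm6' : IntervalIntegrable (fun t => ∫ u in (-1:ℝ)..1, chi (p t u) * (H1 t u)^2)
      volume 0 1 :=
    marginalInt h01 hm11 ((hchi.comp_continuousOn hpj).mul (hH1j.pow 2))
  have hm0' : IntervalIntegrable (fun t => ∫ u in (-1:ℝ)..1, (ρ u - ρb u) * H t u) volume 0 1 :=
    marginalInt h01 hm11
      ((hgc.comp continuous_snd.continuousOn (fun q hq => hq.2)).mul hHj)
  have hΦ3 : IntervalIntegrable (fun t => H1 t 1) volume 0 1 :=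
    iiIcc h01 (sliceCont2 hH1j hu1)
  have hΦ4 : IntervalIntegrable (fun t => H1 t (-1)) volume 0 1 :=
    iiIcc h01 (sliceCont2 hH1j hum1)
  have i2 : IntervalIntegrable (fun t => (1/2) * ∫ u in (-1:ℝ)..1, p t u * H2 t u)
      volume 0 1 := hm2'.const_mul _
  have i3 : IntervalIntegrable (fun t => (ρp/2) * H1 t 1) volume 0 1 := hΦ3.const_mul _
  have i4 : IntervalIntegrable (fun t => (ρm/2) * H1 t (-1)) volume 0 1 := hΦ4.const_mul _
  have i5 : IntervalIntegrable (fun t => (E/2) * ∫ u in (-1:ℝ)..1, chi (p t u) * H1 t u)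
      volume 0 1 := hm5'.const_mul _
  have i6 : IntervalIntegrable
      (fun t => (1/2) * ∫ u in (-1:ℝ)..1, chi (p t u) * (H1 t u)^2) volume 0 1 :=
    hm6'.const_mul _
  have hS_eq : (∫ t in (0:ℝ)..1, ((∫ u in (-1:ℝ)..1, (ρ u - ρb u) * H t u)
        - (1/2) * (∫ u in (-1:ℝ)..1, p t u * H2 t u)
        + (ρp/2) * H1 t 1 - (ρm/2) * H1 t (-1)
        - (E/2) * (∫ u in (-1:ℝ)..1, chi (p t u) * H1 t u)
        - (1/2) * (∫ u in (-1:ℝ)..1, chi (p t u) * (H1 t u)^2)))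
      = (∫ t in (0:ℝ)..1, ∫ u in (-1:ℝ)..1, (ρ u - ρb u) * H t u)
        - (1/2) * (∫ t in (0:ℝ)..1, ∫ u in (-1:ℝ)..1, p t u * H2 t u)
        + (ρp/2) * (∫ t in (0:ℝ)..1, H1 t 1)
        - (ρm/2) * (∫ t in (0:ℝ)..1, H1 t (-1))
        - (E/2) * (∫ t in (0:ℝ)..1, ∫ u in (-1:ℝ)..1, chi (p t u) * H1 t u)
        - (1/2) * (∫ t in (0:ℝ)..1, ∫ u in (-1:ℝ)..1, chi (p t u) * (H1 t u)^2) := by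
    rw [intervalIntegral.integral_sub ((((hm0'.sub i2).add i3).sub i4).sub i5) i6,
        intervalIntegral.integral_sub (((hm0'.sub i2).add i3).sub i4) i5,
        intervalIntegral.integral_sub ((hm0'.sub i2).add i3) i4,
        intervalIntegral.integral_add (hm0'.sub i2) i3,
        intervalIntegral.integral_sub hm0' i2,
        intervalIntegral.integral_const_mul, intervalIntegral.integral_const_mul,
        intervalIntegral.integral_const_mul, intervalIntegral.integral_const_mul,
        intervalIntegral.integral_const_mul]
  have hmain_eq : (∫ u in (-1:ℝ)..1, p 1 u * H 1 u) - (∫ u in (-1:ℝ)..1, ρb u * H 0 u)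
      - (∫ t in (0:ℝ)..1, ∫ u in (-1:ℝ)..1, p t u * Ht t u)
      - (1/2) * (∫ t in (0:ℝ)..1, ∫ u in (-1:ℝ)..1, p t u * H2 t u)
      + (ρp/2) * (∫ t in (0:ℝ)..1, H1 t 1)
      - (ρm/2) * (∫ t in (0:ℝ)..1, H1 t (-1))
      - (E/2) * (∫ t in (0:ℝ)..1, ∫ u in (-1:ℝ)..1, chi (p t u) * H1 t u)
      - (1/2) * (∫ t in (0:ℝ)..1, ∫ u in (-1:ℝ)..1, chi (p t u) * (H1 t u)^2)
      = ∫ t in (0:ℝ)..1, ((∫ u in (-1:ℝ)..1, (ρ u - ρb u) * H t u)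
        - (1/2) * (∫ u in (-1:ℝ)..1, p t u * H2 t u)
        + (ρp/2) * H1 t 1 - (ρm/2) * H1 t (-1)
        - (E/2) * (∫ u in (-1:ℝ)..1, chi (p t u) * H1 t u)
        - (1/2) * (∫ u in (-1:ℝ)..1, chi (p t u) * (H1 t u)^2)) := by
    rw [hS_eq, ← hfirst]
  -- pointwise (in t) bound
  have hbody : ∀ t ∈ Icc (0:ℝ) 1,
      ((∫ u in (-1:ℝ)..1, (ρ u - ρb u) * H t u)
        - (1/2) * (∫ u in (-1:ℝ)..1, p t u * H2 t u)
        + (ρp/2) * H1 t 1 - (ρm/2) * H1 t (-1)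
        - (E/2) * (∫ u in (-1:ℝ)..1, chi (p t u) * H1 t u)
        - (1/2) * (∫ u in (-1:ℝ)..1, chi (p t u) * (H1 t u)^2))
      ≤ K^2 * X^2 / c₀ := by
    intro t ht
    rw [hbp0 t ht, hbp2 t ht]
    -- integrabilities for the splitting
    have j1 : IntervalIntegrable (fun u => cc t u * H1 t u) volume (-1) 1 :=
      iiIcc hm11 ((hcctc t).mul (hH1tc t ht))
    have j2 : IntervalIntegrable
        (fun u => (1/2) * (chi (p t u) * (H1 t u)^2)) volume (-1) 1 :=
      (iiIcc hm11 ((hchi.comp_continuousOn (hptc t)).mul ((hH1tc t ht).pow 2))).const_mul _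
    have j3 : IntervalIntegrable (fun u => (J/2) * H1 t u) volume (-1) 1 :=
      (iiIcc hm11 (hH1tc t ht)).const_mul _
    have j4 : IntervalIntegrable (fun u => -(G u * H1 t u)) volume (-1) 1 :=
      (iiIcc hm11 (hGc.mul (hH1tc t ht))).neg
    have j5 : IntervalIntegrable (fun u => (1/2) * (pu t u * H1 t u)) volume (-1) 1 :=
      (iiIcc hm11 ((hputc t).mul (hH1tc t ht))).const_mul _
    have j6 : IntervalIntegrable (fun u => (E/2) * (chi (p t u) * H1 t u)) volume (-1) 1 :=
      (iiIcc hm11 ((hchi.comp_continuousOn (hptc t)).mul (hH1tc t ht))).const_mul _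
    have e1 : (∫ u in (-1:ℝ)..1, (cc t u * H1 t u - (1/2) * (chi (p t u) * (H1 t u)^2)
          - (J/2) * H1 t u))
        = ∫ u in (-1:ℝ)..1, (-(G u * H1 t u) + (1/2) * (pu t u * H1 t u)
          - (E/2) * (chi (p t u) * H1 t u) - (1/2) * (chi (p t u) * (H1 t u)^2)) := by
      apply intervalIntegral.integral_congr
      intro u hu
      simp only [hccdef, hpudef]; ring
    have e2 : (∫ u in (-1:ℝ)..1, (cc t u * H1 t u - (1/2) * (chi (p t u) * (H1 t u)^2)
          - (J/2) * H1 t u))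
        = (∫ u in (-1:ℝ)..1, (cc t u * H1 t u - (1/2) * (chi (p t u) * (H1 t u)^2)))
          - (J/2) * (∫ u in (-1:ℝ)..1, H1 t u) := by
      rw [intervalIntegral.integral_sub (j1.sub j2) j3, intervalIntegral.integral_const_mul]
    have e3 : (∫ u in (-1:ℝ)..1, (-(G u * H1 t u) + (1/2) * (pu t u * H1 t u)
          - (E/2) * (chi (p t u) * H1 t u) - (1/2) * (chi (p t u) * (H1 t u)^2)))
        = -(∫ u in (-1:ℝ)..1, G u * H1 t u)
          + (1/2) * (∫ u in (-1:ℝ)..1, pu t u * H1 t u)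
          - (E/2) * (∫ u in (-1:ℝ)..1, chi (p t u) * H1 t u)
          - (1/2) * (∫ u in (-1:ℝ)..1, chi (p t u) * (H1 t u)^2) := by
      rw [intervalIntegral.integral_sub ((j4.add j5).sub j6) j2,
          intervalIntegral.integral_sub (j4.add j5) j6,
          intervalIntegral.integral_add j4 j5,
          intervalIntegral.integral_neg,
          intervalIntegral.integral_const_mul, intervalIntegral.integral_const_mul,
          intervalIntegral.integral_const_mul]
    have e4 : (∫ u in (-1:ℝ)..1, (cc t u * H1 t u - (1/2) * (chi (p t u) * (H1 t u)^2)))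
        = -(∫ u in (-1:ℝ)..1, G u * H1 t u)
          + (1/2) * (∫ u in (-1:ℝ)..1, pu t u * H1 t u)
          - (E/2) * (∫ u in (-1:ℝ)..1, chi (p t u) * H1 t u)
          - (1/2) * (∫ u in (-1:ℝ)..1, chi (p t u) * (H1 t u)^2) := by
      rw [← e3, ← e1, e2, hzero t ht]
      ring
    -- pointwise bound of the integrand
    have hptw : ∀ u ∈ Icc (-1:ℝ) 1,
        cc t u * H1 t u - (1/2) * (chi (p t u) * (H1 t u)^2) ≤ K^2 * X^2 / (2 * c₀) := by
      intro u hu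
      have hch := hchi_lb t ht u hu
      have hb1 := hGbound u hu
      have hEnn : (0:ℝ) ≤ |E| := abs_nonneg E
      have ht2 : |t/2| ≤ 1/2 := by rw [abs_le]; constructor <;> linarith only [ht.1, ht.2]
      have hb2 : |(t/2) * (dρ u - (E * chi (ρb u) - J))| ≤ (1/2) * X2 := by
        rw [abs_mul]
        exact mul_le_mul ht2 (hX2 u hu) (abs_nonneg _) (by norm_num)
      have hb3 : |chi (ρb u) - chi (p t u)| ≤ X1 := by
        have hfact : chi (ρb u) - chi (p t u)
            = (ρb u - p t u) * (1 - ρb u - p t u) := by unfold chi; ring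
        have hpr := hmrange t ht u hu
        have hbr := hρbrange u hu
        have hd1 : |ρb u - p t u| ≤ X1 := by
          have he : ρb u - p t u = -(t * (ρ u - ρb u)) := by simp only [hpdef]; ring
          rw [he, abs_neg, abs_mul]
          have ht3 : |t| ≤ 1 := by rw [abs_le]; constructor <;> linarith only [ht.1, ht.2]
          have h9 := mul_le_mul ht3 (hX1 u hu) (abs_nonneg _) zero_le_one
          rw [one_mul] at h9
          exact h9
        have hd2 : |1 - ρb u - p t u| ≤ 1 := by
          rw [abs_le]
          constructor
          · linarith only [hbr.2, hpr.2, hM1, h2]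
          · linarith only [hbr.1, hpr.1, h0, hm0]
        rw [hfact, abs_mul]
        have h9 := mul_le_mul hd1 hd2 (abs_nonneg _) hX1nn
        rw [mul_one] at h9
        exact h9
      have hcb : |cc t u| ≤ K * X := by
        have habs1 : |cc t u| ≤ |(-G u) + (t/2) * (dρ u - (E * chi (ρb u) - J))|
            + |(E/2) * (chi (ρb u) - chi (p t u))| := by
          simp only [hccdef]
          exact abs_add_le _ _
        have habs2 : |(-G u) + (t/2) * (dρ u - (E * chi (ρb u) - J))|
            ≤ |G u| + |(t/2) * (dρ u - (E * chi (ρb u) - J))| := by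
          have h9 := abs_add_le (-G u) ((t/2) * (dρ u - (E * chi (ρb u) - J)))
          rwa [abs_neg] at h9
        have habs3 : |(E/2) * (chi (ρb u) - chi (p t u))| ≤ (|E|/2) * X1 := by
          rw [abs_mul]
          have h9 : |E/2| = |E|/2 := by rw [abs_div]; norm_num
          rw [h9]
          exact mul_le_mul_of_nonneg_left hb3 (by positivity)
        have key : 2*X1 + (1/2)*X2 + (|E|/2)*X1 ≤ (3+|E|)*(X1+X2) := by
          nlinarith only [mul_nonneg hEnn hX1nn, mul_nonneg hEnn hX2nn, hX1nn, hX2nn]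
        rw [hKdef, hXdef]
        linarith only [habs1, habs2, habs3, hb1, hb2, key]
      have hcc2 : (cc t u)^2 ≤ K^2 * X^2 := by
        have h9 := abs_le.1 hcb
        nlinarith only [mul_nonneg (by linarith only [h9.2] : (0:ℝ) ≤ K * X - cc t u)
          (by linarith only [h9.1] : (0:ℝ) ≤ K * X + cc t u)]
      have hstep1 : cc t u * H1 t u - (1/2) * (chi (p t u) * (H1 t u)^2)
          ≤ cc t u * H1 t u - (1/2) * (c₀ * (H1 t u)^2) := by
        nlinarith only [mul_nonneg (sub_nonneg.2 hch) (sq_nonneg (H1 t u))]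
      have hstep2 : cc t u * H1 t u - (1/2) * (c₀ * (H1 t u)^2) ≤ K^2 * X^2 / (2 * c₀) := by
        rw [le_div_iff₀ (by linarith only [hc₀pos] : (0:ℝ) < 2 * c₀)]
        nlinarith only [sq_nonneg (cc t u - c₀ * H1 t u), hcc2, hc₀pos]
      linarith only [hstep1, hstep2]
    have hintegrand : IntervalIntegrable
        (fun u => cc t u * H1 t u - (1/2) * (chi (p t u) * (H1 t u)^2)) volume (-1) 1 :=
      j1.sub j2
    have hmono := intervalIntegral.integral_mono_on hm11 hintegrand
      intervalIntegrable_const hptw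
    rw [intervalIntegral.integral_const, smul_eq_mul] at hmono
    have hfin : (∫ u in (-1:ℝ)..1,
        (cc t u * H1 t u - (1/2) * (chi (p t u) * (H1 t u)^2)))
        ≤ K^2 * X^2 / c₀ := by
      have hne : c₀ ≠ 0 := ne_of_gt hc₀pos
      have heq2 : (1 - (-1:ℝ)) * (K^2 * X^2 / (2 * c₀)) = K^2 * X^2 / c₀ := by
        field_simp; ring
      linarith only [hmono, heq2.le, heq2.ge]
    -- combine
    linarith only [hfin, e4]
  have hSint : IntervalIntegrable (fun t => (∫ u in (-1:ℝ)..1, (ρ u - ρb u) * H t u)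
        - (1/2) * (∫ u in (-1:ℝ)..1, p t u * H2 t u)
        + (ρp/2) * H1 t 1 - (ρm/2) * H1 t (-1)
        - (E/2) * (∫ u in (-1:ℝ)..1, chi (p t u) * H1 t u)
        - (1/2) * (∫ u in (-1:ℝ)..1, chi (p t u) * (H1 t u)^2)) volume 0 1 :=
    ((((hm0'.sub i2).add i3).sub i4).sub i5).sub i6
  have hle := intervalIntegral.integral_mono_on h01 hSint intervalIntegrable_const hbody
  rw [intervalIntegral.integral_const, smul_eq_mul] at hle
  rw [hmain_eq]
  have heq3 : (1 - (0:ℝ)) * (K^2 * X^2 / c₀) = K^2 / c₀ * X^2 := by ring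
  linarith only [hle, heq3.le, heq3.ge]

end

/-- Admissible test functions `H` for the dynamical rate functional on the time
interval `[0,1]`: `C¹` in `t`, `C²` in `u`, vanishing at the spatial endpoints;
`Ht`, `H1`, `H2` are `∂_t H`, `∂_u H`, `∂_u² H`. -/
def admH (H Ht H1 H2 : ℝ → ℝ → ℝ) : Prop :=
  (∀ t ∈ Set.Icc (0:ℝ) 1, ∀ u ∈ Set.Icc (-1:ℝ) 1,
    HasDerivWithinAt (fun s => H s u) (Ht t u) (Set.Icc (0:ℝ) 1) t ∧
    HasDerivWithinAt (H t) (H1 t u) (Set.Icc (-1:ℝ) 1) u ∧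
    HasDerivWithinAt (H1 t) (H2 t u) (Set.Icc (-1:ℝ) 1) u) ∧
  ContinuousOn (Function.uncurry Ht) (Set.Icc (0:ℝ) 1 ×ˢ Set.Icc (-1:ℝ) 1) ∧
  ContinuousOn (Function.uncurry H2) (Set.Icc (0:ℝ) 1 ×ˢ Set.Icc (-1:ℝ) 1) ∧
  ∀ t ∈ Set.Icc (0:ℝ) 1, H t (-1) = 0 ∧ H t 1 = 0

/-- The functional `Ĵ_H(π)` (time horizon `1`, initial profile `ρb`). -/
def Jhat (ρm ρp E : ℝ) (ρb : ℝ → ℝ) (p H Ht H1 H2 : ℝ → ℝ → ℝ) : ℝ :=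
  (∫ u in (-1:ℝ)..1, p 1 u * H 1 u) - (∫ u in (-1:ℝ)..1, ρb u * H 0 u)
  - (∫ t in (0:ℝ)..1, ∫ u in (-1:ℝ)..1, p t u * Ht t u)
  - (1/2) * (∫ t in (0:ℝ)..1, ∫ u in (-1:ℝ)..1, p t u * H2 t u)
  + (ρp/2) * (∫ t in (0:ℝ)..1, H1 t 1)
  - (ρm/2) * (∫ t in (0:ℝ)..1, H1 t (-1))
  - (E/2) * (∫ t in (0:ℝ)..1, ∫ u in (-1:ℝ)..1, chi (p t u) * H1 t u)
  - (1/2) * (∫ t in (0:ℝ)..1, ∫ u in (-1:ℝ)..1, chi (p t u) * (H1 t u)^2)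

/-- `Î₁(π | ρb) = sup_H Ĵ_H(π)` over admissible `H`. -/
def Ihat (ρm ρp E : ℝ) (ρb : ℝ → ℝ) (p : ℝ → ℝ → ℝ) : ℝ :=
  sSup { x | ∃ H Ht H1 H2 : ℝ → ℝ → ℝ, admH H Ht H1 H2 ∧ x = Jhat ρm ρp E ρb p H Ht H1 H2 }

/-- Profiles close to `ρ̄_E` in `C¹` can be reached at small cost along the straight
path: `Î₁(π̂ | ρ̄_E) ≤ C ‖ρ − ρ̄_E‖²_{C¹}`. -/
theorem stmt16 (ρm ρp φm φp E0 : ℝ)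
    (h0 : 0 < ρm) (h1 : ρm < ρp) (h2 : ρp < 1)
    (hφm : φm = Real.log (ρm / (1 - ρm))) (hφp : φp = Real.log (ρp / (1 - ρp)))
    (hE0 : E0 = (φp - φm) / 2) (E J δ : ℝ) (hE : E < E0) (hδ0 : 0 < δ) (hδ1 : δ < 1)
    (hJneg : J ≤ 0) (hJeq : (1/2) * (∫ r in ρm..ρp, (E * chi r - J)⁻¹) = 1)
    (ρb : ℝ → ℝ) (hρb0 : ρb (-1) = ρm)
    (hρbode : ∀ u ∈ Set.Icc (-1:ℝ) 1,
      HasDerivWithinAt ρb (E * chi (ρb u) - J) (Set.Icc (-1:ℝ) 1) u)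
    (hρbrange : ∀ u ∈ Set.Icc (-1:ℝ) 1, ρb u ∈ Set.Icc ρm ρp) :
    ∃ C > (0:ℝ), ∀ ρ dρ : ℝ → ℝ,
      (∀ u ∈ Set.Icc (-1:ℝ) 1, HasDerivWithinAt ρ (dρ u) (Set.Icc (-1:ℝ) 1) u) →
      ContinuousOn dρ (Set.Icc (-1:ℝ) 1) →
      ρ (-1) = ρm → ρ 1 = ρp →
      (∀ u ∈ Set.Icc (-1:ℝ) 1, δ ≤ ρ u ∧ ρ u ≤ 1 - δ) →
      Ihat ρm ρp E ρb (fun t u => ρb u + t * (ρ u - ρb u)) ≤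
        C * (sSup ((fun u => |ρ u - ρb u|) '' Set.Icc (-1:ℝ) 1)
            + sSup ((fun u => |dρ u - (E * chi (ρb u) - J)|) '' Set.Icc (-1:ℝ) 1))^2 := by
  have hpos := posP1 h0 h1 h2 hJeq
  have hρb1 : ρb 1 = ρp := rbOne h0 h1 h2 hpos hJeq hρb0 hρbode hρbrange
  have hM1 : max (1-δ) ρp < 1 := max_lt (by linarith) h2
  have hm0 : 0 < min δ ρm := lt_min hδ0 h0
  have hCpos : 0 < (3 + |E|)^2 / (min δ ρm * (1 - max (1-δ) ρp)) :=
    div_pos (by positivity) (mul_pos hm0 (by linarith))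
  refine ⟨(3 + |E|)^2 / (min δ ρm * (1 - max (1-δ) ρp)), hCpos, ?_⟩
  intro ρ dρ hρd hdρc hρm1 hρp1 hρrange
  rw [Ihat]
  apply Real.sSup_le
  · rintro x ⟨H, Ht, H1, H2, ⟨hder, hHtc, hH2c, hbdry⟩, rfl⟩
    have hmb := main_bound ρm ρp E J δ h0 h1 h2 hδ0 hδ1 hpos ρb hρb0 hρb1 hρbode hρbrange
      ρ dρ hρd hdρc hρm1 hρp1 hρrange H Ht H1 H2 hder hHtc hH2c hbdry
    rw [Jhat]
    exact hmb
  · exact mul_nonneg hCpos.le (sq_nonneg _)
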